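/- Let (B, Θ) be a category with a structure of nullhomotopies, and let (N(g), n_g, ν_g) be a homotopy kernel of g : X → Y with respect to Θ. If Θ(g) is nonempty, then n_g : N(g) → X is a split epimorphism. If moreover Θ(h) is a singleton for every arrow h : N(g) → Y, then n_g is an isomorphism. -/
import Mathlib


open CategoryTheory

universe w v u

/-- A structure of nullhomotopies on a category `B`: a set of nullhomotopies on each arrow,
together with associative and unital pre- and post-composition actions. -/
structure NullStruct (B : Type u) [Category.{v} B] where
  null : ∀ {X Y : B}, (X ⟶ Y) → Type w
  pre : ∀ {W X Y : B} (f : W ⟶ X) {g : X ⟶ Y}, null g → null (f ≫ g)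
  post : ∀ {X Y Z : B} {g : X ⟶ Y} (h : Y ⟶ Z), null g → null (g ≫ h)
  pre_pre : ∀ {V W X Y : B} (f' : V ⟶ W) (f : W ⟶ X) {g : X ⟶ Y} (φ : null g),
    HEq (pre (f' ≫ f) φ) (pre f' (pre f φ))
  post_post : ∀ {X Y Z Z' : B} {g : X ⟶ Y} (h : Y ⟶ Z) (h' : Z ⟶ Z') (φ : null g),
    HEq (post (h ≫ h') φ) (post h' (post h φ))
  pre_post : ∀ {W X Y Z : B} (f : W ⟶ X) {g : X ⟶ Y} (h : Y ⟶ Z) (φ : null g),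
    HEq (pre f (post h φ)) (post h (pre f φ))
  pre_id : ∀ {X Y : B} {g : X ⟶ Y} (φ : null g), HEq (pre (𝟙 X) φ) φ
  post_id : ∀ {X Y : B} {g : X ⟶ Y} (φ : null g), HEq (post (𝟙 Y) φ) φ

variable {B : Type u} [Category.{v} B]

/-- `(N, n, ν)` is a homotopy kernel of `g` with respect to `Θ`. -/
def IsHKernel (Θ : NullStruct.{w} B) {N X Y : B} (g : X ⟶ Y) (n : N ⟶ X)
    (ν : Θ.null (n ≫ g)) : Prop :=
  ∀ {W : B} (f : W ⟶ X) (φ : Θ.null (f ≫ g)),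
    ∃! f' : W ⟶ N, f' ≫ n = f ∧ HEq (Θ.pre f' ν) φ

/-- `(Q, q, θ)` is a homotopy cokernel of `g` with respect to `Θ`. -/
def IsHCokernel (Θ : NullStruct.{w} B) {X Y Q : B} (g : X ⟶ Y) (q : Y ⟶ Q)
    (θ : Θ.null (g ≫ q)) : Prop :=
  ∀ {W : B} (h : Y ⟶ W) (ψ : Θ.null (g ≫ h)),
    ∃! h' : Q ⟶ W, q ≫ h' = h ∧ HEq (Θ.post h' θ) ψ

/-- `T` is `Θ`-orthogonal to `F`: each `Θ(h)` is a singleton for `h : T ⟶ F`. -/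
def NullOrth (Θ : NullStruct.{w} B) (T F : B) : Prop :=
  ∀ h : T ⟶ F, Nonempty (Θ.null h) ∧ Subsingleton (Θ.null h)

/-- A homotopy torsion theory with respect to a structure of nullhomotopies `Θ`. -/
structure HTorsionTheory (Θ : NullStruct.{w} B) where
  T : Set B
  F : Set B
  repleteT : ∀ {X Y : B}, (X ≅ Y) → X ∈ T → Y ∈ T
  repleteF : ∀ {X Y : B}, (X ≅ Y) → X ∈ F → Y ∈ F
  pres : ∀ X : B, ∃ (TX FX : B) (t : TX ⟶ X) (f : X ⟶ FX) (ξ : Θ.null (t ≫ f)),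
    TX ∈ T ∧ FX ∈ F ∧ IsHKernel Θ f t ξ ∧ IsHCokernel Θ t f ξ
  orth : ∀ {t f : B}, t ∈ T → f ∈ F → NullOrth Θ t f

/-- If `Θ(g)` is nonempty then the homotopy kernel projection `n_g` is a split epimorphism;
if moreover `Θ(h)` is a singleton for every `h : N(g) ⟶ Y`, then `n_g` is an isomorphism. -/
theorem stmt7 (Θ : NullStruct.{w} B) {N X Y : B} (g : X ⟶ Y) (n : N ⟶ X)
    (ν : Θ.null (n ≫ g)) (hker : IsHKernel Θ g n ν) :
    (Nonempty (Θ.null g) → IsSplitEpi n) ∧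
    (Nonempty (Θ.null g) →
      (∀ h : N ⟶ Y, Nonempty (Θ.null h) ∧ Subsingleton (Θ.null h)) → IsIso n) := by

  -- helper: any ⟨φ⟩ of Θ.null g yields a section of n
  have sect : ∀ _ : Nonempty (Θ.null g), ∃ s : X ⟶ N, s ≫ n = 𝟙 X := by
    rintro ⟨φ⟩
    obtain ⟨s, ⟨hs, _⟩, _⟩ := hker (𝟙 X) (cast (by rw [Category.id_comp]) φ)
    exact ⟨s, hs⟩
  constructor
  · rintro hφ
    obtain ⟨s, hs⟩ := sect hφ
    exact ⟨⟨⟨s, hs⟩⟩⟩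
  · rintro hφ hsing
    obtain ⟨s, hs⟩ := sect hφ
    refine ⟨s, ?_, hs⟩
    -- uniqueness: both n ≫ s and 𝟙 N factor n through n
    obtain ⟨u, hu, huniq⟩ := hker n ν
    have h1 : n ≫ s = u := by
      apply huniq
      constructor
      · rw [Category.assoc, hs, Category.comp_id]
      · have harr : (n ≫ s) ≫ n ≫ g = n ≫ g := by
          rw [← Category.assoc, Category.assoc n s n, hs, Category.comp_id]
        have : Subsingleton (Θ.null ((n ≫ s) ≫ n ≫ g)) := (hsing _).2
        exact Subsingleton.helim (by rw [harr]) _ _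
    have h2 : 𝟙 N = u := by
      apply huniq
      constructor
      · rw [Category.id_comp]
      · have harr : 𝟙 N ≫ n ≫ g = n ≫ g := by rw [Category.id_comp]
        have : Subsingleton (Θ.null (𝟙 N ≫ n ≫ g)) := (hsing _).2
        exact Subsingleton.helim (by rw [harr]) _ _
    rw [h1, h2]
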